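/- Under the hypotheses and iteration of the main theorem — H a real Hilbert space, C ⊆ H nonempty closed convex, F : C × C → ℝ satisfying (A1)–(A4), B : C → H α-inverse-strongly monotone, (T_i) nonexpansive self-maps of C with 𝔽 := (⋂_{i=1}^∞ Fix(T_i)) ∩ VI(B,C) ∩ EP(F) ≠ ∅, A strongly positive bounded linear self-adjoint with coefficient γ̄ > 0, f a ρ-contraction with γρ < γ̄ for some γ > 0, (W_n) the W-mappings for parameters μ_i ∈ (0,1), (α_n), (λ_n) ⊂ [0,1], (γ_n) ⊂ (0,2α), (r_n) ⊂ (0,∞), (β_n) ⊂ [0,1] with β_n ≤ ‖A‖⁻¹ for all n, and x_1 ∈ C, u_n the unique point with F(u_n,y) + (1/r_n)⟨y − u_n, u_n − x_n⟩ ≥ 0 for all y ∈ C, z_n = λ_n u_n + (1−λ_n) W_n u_n, y_n = β_n γ f(z_n) + (I − β_n A) P_C(z_n − γ_n B z_n), x_{n+1} = α_n x_n + (1−α_n) y_n — the iterates satisfy, for every p ∈ 𝔽 and every n ≥ 1, ‖x_n − p‖ ≤ max{ ‖x_1 − p‖, ‖γ f(p) − A p‖/(γ̄ − γρ) }; in particular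 the sequences (x_n), (u_n), (z_n), (y_n) are bounded. -/

import Mathlib

open Filter Topology
open scoped RealInnerProductSpace

/-- The mappings `U n k` of Shimoji–Takahashi: `U n k = I` for `k ≥ n+1` and
`U n k = μ k • T k ∘ U n (k+1) + (1 - μ k) • I` for `k ≤ n`. -/
noncomputable def Umap {H : Type*} [AddCommGroup H] [Module ℝ H]
    (T : ℕ → H → H) (μ : ℕ → ℝ) (n k : ℕ) (x : H) : H :=
  if n + 1 ≤ k then x
  else μ k • T k (Umap T μ n (k + 1) x) + (1 - μ k) • x
termination_by n + 1 - k
decreasing_by omega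

/-- The `W`-mapping `W n = U n 1` generated by `T 1, T 2, …` and `μ 1, μ 2, …`. -/
noncomputable def Wmap {H : Type*} [AddCommGroup H] [Module ℝ H]
    (T : ℕ → H → H) (μ : ℕ → ℝ) (n : ℕ) (x : H) : H :=
  Umap T μ n 1 x

section Aux
variable {H : Type*} [NormedAddCommGroup H] [InnerProductSpace ℝ H]

lemma proj_char (C : Set H) (hCcv : Convex ℝ C)
    (PC : H → H) (hPC : ∀ x : H, PC x ∈ C ∧ ∀ y ∈ C, ‖x - PC x‖ ≤ ‖x - y‖) :
    ∀ x : H, ∀ y ∈ C, ⟪x - PC x, y - PC x⟫ ≤ 0 := by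
  intro x
  have : Nonempty C := ⟨⟨PC x, (hPC x).1⟩⟩
  have heq : ‖x - PC x‖ = ⨅ w : C, ‖x - w‖ := by
    apply le_antisymm
    · exact le_ciInf fun w => (hPC x).2 w w.2
    · exact ciInf_le ⟨0, by rintro r ⟨w, rfl⟩; positivity⟩ (⟨PC x, (hPC x).1⟩ : C)
  exact (norm_eq_iInf_iff_real_inner_le_zero hCcv (hPC x).1).mp heq

lemma proj_nonexp (C : Set H) (hCcv : Convex ℝ C)
    (PC : H → H) (hPC : ∀ x : H, PC x ∈ C ∧ ∀ y ∈ C, ‖x - PC x‖ ≤ ‖x - y‖) :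
    ∀ a b : H, ‖PC a - PC b‖ ≤ ‖a - b‖ := by
  intro a b
  have h1 := proj_char C hCcv PC hPC a (PC b) (hPC b).1
  have h2 := proj_char C hCcv PC hPC b (PC a) (hPC a).1
  have key : ‖PC a - PC b‖ ^ 2 ≤ ⟪a - b, PC a - PC b⟫ := by
    simp only [inner_sub_left, inner_sub_right, ← real_inner_self_eq_norm_sq] at h1 h2 ⊢
    have c1 : ⟪PC a, PC b⟫ = ⟪PC b, PC a⟫ := real_inner_comm _ _
    linarith
  have h3 : ⟪a - b, PC a - PC b⟫ ≤ ‖a - b‖ * ‖PC a - PC b‖ := real_inner_le_norm _ _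
  nlinarith [norm_nonneg (PC a - PC b), norm_nonneg (a - b)]

lemma posop_norm (S : H →L[ℝ] H) (hsa : ∀ x y : H, ⟪S x, y⟫ = ⟪x, S y⟫) (c : ℝ)
    (h0 : ∀ x : H, 0 ≤ ⟪S x, x⟫) (hc : ∀ x : H, ⟪S x, x⟫ ≤ c * ‖x‖ ^ 2) (x : H) :
    ‖S x‖ ≤ c * ‖x‖ := by
  rcases eq_or_ne x 0 with rfl | hx
  · simp
  have hx2 : 0 < ‖x‖ ^ 2 := pow_pos (norm_pos_iff.mpr hx) 2
  have hcnn : 0 ≤ c := by nlinarith [h0 x, hc x]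
  have cs : ∀ u v : H, ⟪S u, v⟫ ^ 2 ≤ ⟪S u, u⟫ * ⟪S v, v⟫ := by
    intro u v
    have hq : ∀ t : ℝ, 0 ≤ ⟪S v, v⟫ * (t * t) + (2 * ⟪S u, v⟫) * t + ⟪S u, u⟫ := by
      intro t
      have := h0 (u + t • v)
      simp only [map_add, map_smul, inner_add_left, inner_add_right, inner_smul_left,
        inner_smul_right, RCLike.ofReal_real_eq_id, id, conj_trivial] at this
      have hcm : ⟪S v, u⟫ = ⟪S u, v⟫ := by rw [hsa v u, real_inner_comm]
      rw [hcm] at this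
      ring_nf at this ⊢
      linarith
    have := discrim_le_zero hq
    rw [discrim] at this
    nlinarith
  rcases eq_or_ne (S x) 0 with h | h
  · rw [h]; simp; positivity
  have hSx2 : 0 < ‖S x‖ ^ 2 := pow_pos (norm_pos_iff.mpr h) 2
  have := cs x (S x)
  rw [real_inner_self_eq_norm_sq] at this
  have h2 := hc x
  have h3 := hc (S x)
  have key : ‖S x‖ ^ 2 ≤ (c * ‖x‖) ^ 2 := by
    have hb : ⟪S x, x⟫ * ⟪S (S x), S x⟫ ≤ (c * ‖x‖ ^ 2) * (c * ‖S x‖ ^ 2) := by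
      have := h0 (S x)
      have := h0 x
      nlinarith
    nlinarith
  exact le_of_pow_le_pow_left₀ two_ne_zero (by positivity) key

lemma Umap_stop {T : ℕ → H → H} {μ : ℕ → ℝ} {n k : ℕ} (h : n + 1 ≤ k) (x : H) :
    Umap T μ n k x = x := by rw [Umap, if_pos h]

lemma Umap_step {T : ℕ → H → H} {μ : ℕ → ℝ} {n k : ℕ} (h : ¬ n + 1 ≤ k) (x : H) :
    Umap T μ n k x = μ k • T k (Umap T μ n (k + 1) x) + (1 - μ k) • x := by
  rw [Umap, if_neg h]

lemma umap_props (C : Set H) (hCcv : Convex ℝ C) (T : ℕ → H → H)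
    (hTmaps : ∀ i, 1 ≤ i → Set.MapsTo (T i) C C)
    (hTne : ∀ i, 1 ≤ i → ∀ x ∈ C, ∀ y ∈ C, ‖T i x - T i y‖ ≤ ‖x - y‖)
    (μ : ℕ → ℝ) (hμ0 : ∀ i, 1 ≤ i → 0 ≤ μ i) (hμ1 : ∀ i, 1 ≤ i → μ i ≤ 1)
    (p : H) (hpfix : ∀ i, 1 ≤ i → T i p = p) (n : ℕ) :
    ∀ m k, n + 1 - k ≤ m → 1 ≤ k →
      (∀ x ∈ C, Umap T μ n k x ∈ C) ∧
      (∀ x ∈ C, ∀ y ∈ C, ‖Umap T μ n k x - Umap T μ n k y‖ ≤ ‖x - y‖) ∧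
      Umap T μ n k p = p := by
  intro m
  induction m with
  | zero =>
    intro k hk hk1
    have hnk : n + 1 ≤ k := by omega
    simp only [Umap_stop hnk]
    exact ⟨fun x hx => hx, fun x hx y hy => le_rfl, trivial⟩
  | succ m ih =>
    intro k hk hk1
    by_cases hnk : n + 1 ≤ k
    · simp only [Umap_stop hnk]
      exact ⟨fun x hx => hx, fun x hx y hy => le_rfl, trivial⟩
    · obtain ⟨ihC, ihne, ihfix⟩ := ih (k + 1) (by omega) (by omega)
      have hμ0k := hμ0 k hk1
      have hμ1k := hμ1 k hk1
      have hmemU : ∀ x ∈ C, Umap T μ n k x ∈ C := by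
        intro x hx
        rw [Umap_step hnk]
        exact hCcv (hTmaps k hk1 (ihC x hx)) hx hμ0k (by linarith) (by ring)
      refine ⟨hmemU, fun x hx y hy => ?_, ?_⟩
      · rw [Umap_step hnk, Umap_step hnk]
        have e : μ k • T k (Umap T μ n (k+1) x) + (1 - μ k) • x
            - (μ k • T k (Umap T μ n (k+1) y) + (1 - μ k) • y)
            = μ k • (T k (Umap T μ n (k+1) x) - T k (Umap T μ n (k+1) y))
              + (1 - μ k) • (x - y) := by
          rw [smul_sub, smul_sub]; abel
        rw [e]
        calc _ ≤ ‖μ k • (T k (Umap T μ n (k+1) x) - T k (Umap T μ n (k+1) y))‖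
                + ‖(1 - μ k) • (x - y)‖ := norm_add_le _ _
          _ = μ k * ‖T k (Umap T μ n (k+1) x) - T k (Umap T μ n (k+1) y)‖
                + (1 - μ k) * ‖x - y‖ := by
              rw [norm_smul, norm_smul, Real.norm_eq_abs, Real.norm_eq_abs,
                abs_of_nonneg hμ0k, abs_of_nonneg (by linarith)]
          _ ≤ μ k * ‖Umap T μ n (k+1) x - Umap T μ n (k+1) y‖ + (1 - μ k) * ‖x - y‖ := by
              gcongr
              exact hTne k hk1 _ (ihC x hx) _ (ihC y hy)
          _ ≤ μ k * ‖x - y‖ + (1 - μ k) * ‖x - y‖ := by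
              gcongr
              exact ihne x hx y hy
          _ = ‖x - y‖ := by ring
      · rw [Umap_step hnk, ihfix, hpfix k hk1]
        rw [← add_smul]
        simp
end Aux

set_option maxHeartbeats 1000000 in
/-- **Boundedness of the iterates of the main iteration.**  Under the
hypotheses of the main theorem (with `β n ≤ ‖A‖⁻¹`), the iterates satisfy
`‖x n - p‖ ≤ max {‖x 1 - p‖, ‖γ f p - A p‖ / (γbar - γρ)}` for every `p ∈ 𝔽`
and `n ≥ 1`; in particular the sequences `x`, `u`, `z`, `y` are bounded. -/
theorem stmt_18 {H : Type*} [NormedAddCommGroup H] [InnerProductSpace ℝ H]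
    [CompleteSpace H]
    (C : Set H) (hCne : C.Nonempty) (hCcl : IsClosed C) (hCcv : Convex ℝ C)
    -- the bifunction F satisfying (A1)-(A4)
    (F : H → H → ℝ)
    (hF1 : ∀ x ∈ C, F x x = 0)
    (hF2 : ∀ x ∈ C, ∀ y ∈ C, F x y + F y x ≤ 0)
    (hF3 : ∀ x ∈ C, ∀ y ∈ C, ∀ z ∈ C,
      limsup (fun t : ℝ => F (t • z + (1 - t) • x) y) (𝓝[>] 0) ≤ F x y)
    (hF4 : ∀ x ∈ C, ConvexOn ℝ C (fun y => F x y)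
      ∧ LowerSemicontinuousOn (fun y => F x y) C)
    -- B an α-inverse-strongly monotone mapping of C into H
    (B : H → H) (α : ℝ) (hα : 0 < α)
    (hB : ∀ u ∈ C, ∀ v ∈ C, α * ‖B u - B v‖ ^ 2 ≤ ⟪B u - B v, u - v⟫)
    -- the infinite family of nonexpansive self-maps of C
    (T : ℕ → H → H)
    (hTmaps : ∀ i, 1 ≤ i → Set.MapsTo (T i) C C)
    (hTne : ∀ i, 1 ≤ i → ∀ x ∈ C, ∀ y ∈ C, ‖T i x - T i y‖ ≤ ‖x - y‖)
    -- the parameters of the W-mappings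
    (μ : ℕ → ℝ) (μbar : ℝ) (hμbar : μbar < 1)
    (hμ : ∀ i, 1 ≤ i → 0 < μ i ∧ μ i ≤ μbar)
    -- A strongly positive bounded linear self-adjoint
    (A : H →L[ℝ] H) (hAsa : ∀ x y : H, ⟪A x, y⟫ = ⟪x, A y⟫)
    (γbar : ℝ) (hγbar : 0 < γbar)
    (hApos : ∀ x : H, γbar * ‖x‖ ^ 2 ≤ ⟪A x, x⟫)
    -- f a ρ-contraction, γ > 0 with γρ < γbar
    (f : H → H) (ρ : ℝ) (hρ : ρ ∈ Set.Ioo (0 : ℝ) 1)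
    (hf : ∀ x y : H, ‖f x - f y‖ ≤ ρ * ‖x - y‖)
    (γ : ℝ) (hγ : 0 < γ) (hγρ : γ * ρ < γbar)
    -- the metric projection onto C
    (PC : H → H)
    (hPC : ∀ x : H, PC x ∈ C ∧ ∀ y ∈ C, ‖x - PC x‖ ≤ ‖x - y‖)
    -- the solution set 𝔽 = (⋂ᵢ Fix Tᵢ) ∩ VI(B,C) ∩ EP(F), assumed nonempty
    (Fset : Set H)
    (hFset : Fset = ({x : H | x ∈ C ∧ ∀ i, 1 ≤ i → T i x = x}
        ∩ {u : H | u ∈ C ∧ ∀ v ∈ C, 0 ≤ ⟪B u, v - u⟫}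
        ∩ {x : H | x ∈ C ∧ ∀ y ∈ C, 0 ≤ F x y}))
    (hFne : Fset.Nonempty)
    -- the parameter sequences
    (αs βs lams γs rs : ℕ → ℝ)
    (hαs : ∀ n, αs n ∈ Set.Icc (0 : ℝ) 1)
    (hβs : ∀ n, βs n ∈ Set.Icc (0 : ℝ) 1)
    (hβsA : ∀ n, βs n ≤ ‖A‖⁻¹)
    (hlams : ∀ n, lams n ∈ Set.Icc (0 : ℝ) 1)
    (hγs : ∀ n, γs n ∈ Set.Ioo 0 (2 * α))
    (hrs : ∀ n, 0 < rs n)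
    -- the iteration
    (x u z y : ℕ → H)
    (hx1 : x 1 ∈ C)
    (hu : ∀ n, 1 ≤ n → u n ∈ C ∧
      ∀ w ∈ C, 0 ≤ F (u n) w + (1 / rs n) * ⟪w - u n, u n - x n⟫)
    (hz : ∀ n, 1 ≤ n → z n = lams n • u n + (1 - lams n) • Wmap T μ n (u n))
    (hy : ∀ n, 1 ≤ n → y n
      = βs n • (γ • f (z n))
        + (PC (z n - γs n • B (z n)) - βs n • A (PC (z n - γs n • B (z n)))))
    (hx : ∀ n, 1 ≤ n → x (n + 1) = αs n • x n + (1 - αs n) • y n) :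
    (∀ p ∈ Fset, ∀ n, 1 ≤ n →
      ‖x n - p‖ ≤ max ‖x 1 - p‖ (‖γ • f p - A p‖ / (γbar - γ * ρ))) ∧
    Bornology.IsBounded (x '' Set.Ici 1) ∧
    Bornology.IsBounded (u '' Set.Ici 1) ∧
    Bornology.IsBounded (z '' Set.Ici 1) ∧
    Bornology.IsBounded (y '' Set.Ici 1) := by
  -- trivial case
  rcases subsingleton_or_nontrivial H with hsub | hnt
  · have hall : ∀ v : H, v = 0 := fun v => Subsingleton.elim v 0
    have hb : ∀ g : ℕ → H, Bornology.IsBounded (g '' Set.Ici 1) := by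
      intro g
      apply Bornology.IsBounded.subset (Metric.isBounded_closedBall (x := (0:H)) (r := 0))
      rintro _ ⟨n, hn, rfl⟩
      simp [hall (g n)]
    refine ⟨fun p _ n _ => ?_, hb x, hb u, hb z, hb y⟩
    rw [hall (x n - p), hall (x 1 - p)]
    exact le_max_left _ _
  -- main case
  have hρ0 := hρ.1
  have hρ1 := hρ.2
  have hΔ : 0 < γbar - γ * ρ := by linarith
  set Δ := γbar - γ * ρ with hΔdef
  have hAnorm : γbar ≤ ‖A‖ := by
    obtain ⟨x0, hx0⟩ := exists_ne (0 : H)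
    have h1 := hApos x0
    have h2 : ⟪A x0, x0⟫ ≤ ‖A x0‖ * ‖x0‖ := real_inner_le_norm _ _
    have h3 : ‖A x0‖ ≤ ‖A‖ * ‖x0‖ := A.le_opNorm x0
    have h4 : 0 < ‖x0‖ := norm_pos_iff.mpr hx0
    nlinarith [mul_le_mul_of_nonneg_right h3 h4.le, mul_pos h4 h4]
  have hμ0 : ∀ i, 1 ≤ i → 0 ≤ μ i := fun i hi => (hμ i hi).1.le
  have hμ1 : ∀ i, 1 ≤ i → μ i ≤ 1 := fun i hi => le_of_lt (lt_of_le_of_lt (hμ i hi).2 hμbar)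
  have hβ0 : ∀ n, 0 ≤ βs n := fun n => (hβs n).1
  have hβA : ∀ n, βs n * ‖A‖ ≤ 1 := by
    intro n
    have h1 : 0 < ‖A‖ := lt_of_lt_of_le hγbar hAnorm
    calc βs n * ‖A‖ ≤ ‖A‖⁻¹ * ‖A‖ := mul_le_mul_of_nonneg_right (hβsA n) (norm_nonneg _)
      _ = 1 := inv_mul_cancel₀ (ne_of_gt h1)
  have hβγ : ∀ n, βs n * γbar ≤ 1 := fun n =>
    le_trans (mul_le_mul_of_nonneg_left hAnorm (hβ0 n)) (hβA n)
  -- the operator norm bound for I - βs n • A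
  have hS : ∀ n, ∀ v : H, ‖v - βs n • A v‖ ≤ (1 - βs n * γbar) * ‖v‖ := by
    intro n v
    set S : H →L[ℝ] H := ContinuousLinearMap.id ℝ H - βs n • A with hSdef
    have hSapp : ∀ w : H, S w = w - βs n • A w := fun w => rfl
    have hsa' : ∀ a b : H, ⟪S a, b⟫ = ⟪a, S b⟫ := by
      intro a b
      simp only [hSapp, inner_sub_left, inner_sub_right, real_inner_smul_left,
        real_inner_smul_right, hAsa]
    have h0 : ∀ w : H, 0 ≤ ⟪S w, w⟫ := by
      intro w
      have h1 : ⟪A w, w⟫ ≤ ‖A‖ * ‖w‖ ^ 2 := by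
        have e1 := real_inner_le_norm (A w) w
        have e2 := A.le_opNorm w
        nlinarith [norm_nonneg w, norm_nonneg (A w)]
      have h2 : βs n * ⟪A w, w⟫ ≤ βs n * (‖A‖ * ‖w‖ ^ 2) :=
        mul_le_mul_of_nonneg_left h1 (hβ0 n)
      have h3 : βs n * (‖A‖ * ‖w‖ ^ 2) ≤ ‖w‖ ^ 2 := by
        nlinarith [hβA n, sq_nonneg ‖w‖]
      simp only [hSapp, inner_sub_left, real_inner_smul_left, real_inner_self_eq_norm_sq]
      linarith
    have hc : ∀ w : H, ⟪S w, w⟫ ≤ (1 - βs n * γbar) * ‖w‖ ^ 2 := by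
      intro w
      have h1 := hApos w
      have h2 : βs n * (γbar * ‖w‖ ^ 2) ≤ βs n * ⟪A w, w⟫ :=
        mul_le_mul_of_nonneg_left h1 (hβ0 n)
      simp only [hSapp, inner_sub_left, real_inner_smul_left, real_inner_self_eq_norm_sq]
      nlinarith
    have := posop_norm S hsa' _ h0 hc v
    rwa [hSapp] at this
  -- the main estimate for an arbitrary p ∈ Fset
  have main : ∀ p ∈ Fset, ∀ n, 1 ≤ n →
      ‖x n - p‖ ≤ max ‖x 1 - p‖ (‖γ • f p - A p‖ / Δ) ∧
      ‖u n - p‖ ≤ max ‖x 1 - p‖ (‖γ • f p - A p‖ / Δ) ∧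
      ‖z n - p‖ ≤ max ‖x 1 - p‖ (‖γ • f p - A p‖ / Δ) ∧
      ‖y n - p‖ ≤ max ‖x 1 - p‖ (‖γ • f p - A p‖ / Δ) := by
    intro p hp
    rw [hFset] at hp
    obtain ⟨⟨⟨hpC, hpT⟩, hpC', hpVI⟩, hpC'', hpEP⟩ := hp
    set M := max ‖x 1 - p‖ (‖γ • f p - A p‖ / Δ) with hM
    have hM0 : 0 ≤ M := le_trans (norm_nonneg _) (le_max_left _ _)
    have hM2 : ‖γ • f p - A p‖ / Δ ≤ M := le_max_right _ _
    -- step 1 : ‖u n - p‖ ≤ ‖x n - p‖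
    have hu_le : ∀ n, 1 ≤ n → ‖u n - p‖ ≤ ‖x n - p‖ := by
      intro n hn
      obtain ⟨huC, huF⟩ := hu n hn
      have h1 := huF p hpC
      have h2 : 0 ≤ F p (u n) := hpEP (u n) huC
      have h3 := hF2 (u n) huC p hpC
      have hr := hrs n
      have hip : 0 ≤ 1 / rs n * ⟪p - u n, u n - x n⟫ := by linarith
      have h4 : 0 ≤ ⟪p - u n, u n - x n⟫ := by
        by_contra hneg
        push_neg at hneg
        have : 1 / rs n * ⟪p - u n, u n - x n⟫ < 0 :=
          mul_neg_of_pos_of_neg (by positivity) hneg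
        linarith
      have h5 : ‖u n - p‖ ^ 2 ≤ ⟪u n - p, x n - p⟫ := by
        simp only [inner_sub_left, inner_sub_right, ← real_inner_self_eq_norm_sq] at h4 ⊢
        have c1 : ⟪p, u n⟫ = ⟪u n, p⟫ := real_inner_comm _ _
        have c2 : ⟪p, x n⟫ = ⟪x n, p⟫ := real_inner_comm _ _
        have c3 : ⟪u n, x n⟫ = ⟪x n, u n⟫ := real_inner_comm _ _
        linarith
      have h6 := real_inner_le_norm (u n - p) (x n - p)
      nlinarith [norm_nonneg (u n - p), norm_nonneg (x n - p)]
    -- step 2 : z n ∈ C and ‖z n - p‖ ≤ ‖u n - p‖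
    have hWp := fun n : ℕ =>
      umap_props C hCcv T hTmaps hTne μ hμ0 hμ1 p hpT n n 1 (by omega) le_rfl
    have hz_mem : ∀ n, 1 ≤ n → z n ∈ C ∧ ‖z n - p‖ ≤ ‖u n - p‖ := by
      intro n hn
      obtain ⟨huC, _⟩ := hu n hn
      obtain ⟨hWC, hWne, hWfix⟩ := hWp n
      have hl0 := (hlams n).1
      have hl1 := (hlams n).2
      constructor
      · rw [hz n hn, Wmap]
        exact hCcv huC (hWC (u n) huC) hl0 (by linarith) (by ring)
      · rw [hz n hn, Wmap]
        have e : lams n • u n + (1 - lams n) • Umap T μ n 1 (u n) - p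
            = lams n • (u n - p) + (1 - lams n) • (Umap T μ n 1 (u n) - Umap T μ n 1 p) := by
          rw [hWfix, smul_sub, smul_sub]
          have : lams n • p + (1 - lams n) • p = p := by rw [← add_smul]; simp
          rw [sub_eq_iff_eq_add]
          rw [show lams n • u n - lams n • p + ((1 - lams n) • Umap T μ n 1 (u n)
            - (1 - lams n) • p) + p
            = lams n • u n + (1 - lams n) • Umap T μ n 1 (u n)
              + (p - (lams n • p + (1 - lams n) • p)) by abel, this]
          abel
        rw [e]
        calc _ ≤ ‖lams n • (u n - p)‖
              + ‖(1 - lams n) • (Umap T μ n 1 (u n) - Umap T μ n 1 p)‖ := norm_add_le _ _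
          _ = lams n * ‖u n - p‖
              + (1 - lams n) * ‖Umap T μ n 1 (u n) - Umap T μ n 1 p‖ := by
            rw [norm_smul, norm_smul, Real.norm_eq_abs, Real.norm_eq_abs,
              abs_of_nonneg hl0, abs_of_nonneg (by linarith)]
          _ ≤ lams n * ‖u n - p‖ + (1 - lams n) * ‖u n - p‖ :=
            add_le_add le_rfl
              (mul_le_mul_of_nonneg_left (hWne (u n) huC p hpC) (by linarith))
          _ = ‖u n - p‖ := by ring
    -- step 3 : the projection step
    have ht : ∀ n, 1 ≤ n → ‖PC (z n - γs n • B (z n)) - p‖ ≤ ‖z n - p‖ := by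
      intro n hn
      have hzC := (hz_mem n hn).1
      have hg0 := (hγs n).1
      have hg2 := (hγs n).2
      have hfix : PC (p - γs n • B p) = p := by
        set q := PC (p - γs n • B p) with hqdef
        have hqC := (hPC (p - γs n • B p)).1
        have hchar := proj_char C hCcv PC hPC (p - γs n • B p) p hpC
        have hvi := hpVI q hqC
        have e : ⟪p - γs n • B p - q, p - q⟫ = ‖p - q‖ ^ 2 - γs n * ⟪B p, p - q⟫ := by
          rw [sub_right_comm, inner_sub_left, real_inner_smul_left,
            real_inner_self_eq_norm_sq]
        have e2 : ⟪B p, p - q⟫ = -⟪B p, q - p⟫ := by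
          rw [← inner_neg_right, neg_sub]
        have hkey : ‖p - q‖ ^ 2 ≤ 0 := by
          nlinarith [hchar, hvi, hg0, mul_nonneg hg0.le hvi]
        have h0 : ‖p - q‖ = 0 := le_antisymm (by nlinarith [norm_nonneg (p - q)]) (norm_nonneg _)
        have := norm_eq_zero.mp h0
        rw [sub_eq_zero] at this
        exact this.symm
      have hsm : ‖(z n - γs n • B (z n)) - (p - γs n • B p)‖ ≤ ‖z n - p‖ := by
        have hBzp := hB (z n) hzC p hpC
        have e : (z n - γs n • B (z n)) - (p - γs n • B p)
            = (z n - p) - γs n • (B (z n) - B p) := by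
          rw [smul_sub]; abel
        rw [e]
        have hsq : ‖(z n - p) - γs n • (B (z n) - B p)‖ ^ 2 ≤ ‖z n - p‖ ^ 2 := by
          rw [norm_sub_sq_real, real_inner_smul_right, norm_smul, Real.norm_eq_abs,
            abs_of_nonneg hg0.le]
          have hcm : ⟪z n - p, B (z n) - B p⟫ = ⟪B (z n) - B p, z n - p⟫ :=
            real_inner_comm _ _
          have key : γs n * (γs n * ‖B (z n) - B p‖ ^ 2)
              ≤ γs n * (2 * ⟪B (z n) - B p, z n - p⟫) := by
            have k1 : γs n * ‖B (z n) - B p‖ ^ 2 ≤ 2 * α * ‖B (z n) - B p‖ ^ 2 := by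
              nlinarith [sq_nonneg ‖B (z n) - B p‖]
            have k2 : 2 * α * ‖B (z n) - B p‖ ^ 2 ≤ 2 * ⟪B (z n) - B p, z n - p⟫ := by
              linarith
            exact mul_le_mul_of_nonneg_left (k1.trans k2) hg0.le
          rw [← hcm] at key
          nlinarith [key]
        exact le_of_pow_le_pow_left₀ two_ne_zero (norm_nonneg _) hsq
      calc ‖PC (z n - γs n • B (z n)) - p‖
          = ‖PC (z n - γs n • B (z n)) - PC (p - γs n • B p)‖ := by rw [hfix]
        _ ≤ ‖(z n - γs n • B (z n)) - (p - γs n • B p)‖ := proj_nonexp C hCcv PC hPC _ _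
        _ ≤ ‖z n - p‖ := hsm
    -- step 4 : the y estimate
    have hy_le : ∀ n, 1 ≤ n → ‖y n - p‖
        ≤ (1 - βs n * Δ) * ‖x n - p‖ + βs n * Δ * (‖γ • f p - A p‖ / Δ) := by
      intro n hn
      set t := PC (z n - γs n • B (z n)) with htdef
      have e : y n - p = (βs n * γ) • (f (z n) - f p) + βs n • (γ • f p - A p)
          + ((t - p) - βs n • A (t - p)) := by
        rw [hy n hn, map_sub]
        module
      have h1 : ‖(βs n * γ) • (f (z n) - f p)‖ ≤ βs n * γ * (ρ * ‖z n - p‖) := by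
        rw [norm_smul, Real.norm_eq_abs, abs_of_nonneg (mul_nonneg (hβ0 n) hγ.le)]
        exact mul_le_mul_of_nonneg_left (hf _ _) (mul_nonneg (hβ0 n) hγ.le)
      have h2 : ‖βs n • (γ • f p - A p)‖ = βs n * ‖γ • f p - A p‖ := by
        rw [norm_smul, Real.norm_eq_abs, abs_of_nonneg (hβ0 n)]
      have h3 : ‖(t - p) - βs n • A (t - p)‖ ≤ (1 - βs n * γbar) * ‖t - p‖ := hS n (t - p)
      have h4 : ‖t - p‖ ≤ ‖x n - p‖ :=
        le_trans (ht n hn) (le_trans (hz_mem n hn).2 (hu_le n hn))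
      have h5 : ‖z n - p‖ ≤ ‖x n - p‖ := le_trans (hz_mem n hn).2 (hu_le n hn)
      have h6 : 0 ≤ 1 - βs n * γbar := by linarith [hβγ n]
      have h7 : (1 - βs n * γbar) * ‖t - p‖ ≤ (1 - βs n * γbar) * ‖x n - p‖ :=
        mul_le_mul_of_nonneg_left h4 h6
      have h8 : βs n * γ * (ρ * ‖z n - p‖) ≤ βs n * γ * (ρ * ‖x n - p‖) := by
        have h9 : 0 ≤ βs n * γ * ρ := mul_nonneg (mul_nonneg (hβ0 n) hγ.le) hρ0.le
        nlinarith [h5, h9]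
      have e2 : βs n * γ * (ρ * ‖x n - p‖) + βs n * ‖γ • f p - A p‖
          + (1 - βs n * γbar) * ‖x n - p‖
          = (1 - βs n * Δ) * ‖x n - p‖ + βs n * Δ * (‖γ • f p - A p‖ / Δ) := by
        rw [hΔdef]
        field_simp [show γbar - γ * ρ ≠ 0 from ne_of_gt (by linarith)]
        ring
      calc ‖y n - p‖ ≤ ‖(βs n * γ) • (f (z n) - f p)‖ + ‖βs n • (γ • f p - A p)‖
            + ‖(t - p) - βs n • A (t - p)‖ := by rw [e]; exact norm_add₃_le
        _ ≤ βs n * γ * (ρ * ‖x n - p‖) + βs n * ‖γ • f p - A p‖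
            + (1 - βs n * γbar) * ‖x n - p‖ := by
          have := le_trans h1 h8
          linarith [le_trans h3 h7]
        _ = _ := e2
    -- step 5 : the induction
    have hβΔ0 : ∀ n, 0 ≤ βs n * Δ := fun n => mul_nonneg (hβ0 n) hΔ.le
    have hβΔ1 : ∀ n, βs n * Δ ≤ 1 := fun n =>
      le_trans (mul_le_mul_of_nonneg_left (by nlinarith [mul_pos hγ hρ0]) (hβ0 n)) (hβγ n)
    have hyM : ∀ n, 1 ≤ n → ‖x n - p‖ ≤ M → ‖y n - p‖ ≤ M := by
      intro n hn hxn
      have h1 := hy_le n hn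
      have h2 : (1 - βs n * Δ) * ‖x n - p‖ ≤ (1 - βs n * Δ) * M :=
        mul_le_mul_of_nonneg_left hxn (by linarith [hβΔ1 n])
      have h3 : βs n * Δ * (‖γ • f p - A p‖ / Δ) ≤ βs n * Δ * M :=
        mul_le_mul_of_nonneg_left hM2 (hβΔ0 n)
      nlinarith
    have hx_le : ∀ n, 1 ≤ n → ‖x n - p‖ ≤ M := by
      refine Nat.le_induction (le_max_left _ _) ?_
      intro n hn ihn
      have hyb := hyM n hn ihn
      rw [hx n hn]
      have ha0 := (hαs n).1
      have ha1 := (hαs n).2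
      have e : αs n • x n + (1 - αs n) • y n - p
          = αs n • (x n - p) + (1 - αs n) • (y n - p) := by module
      rw [e]
      calc _ ≤ ‖αs n • (x n - p)‖ + ‖(1 - αs n) • (y n - p)‖ := norm_add_le _ _
        _ = αs n * ‖x n - p‖ + (1 - αs n) * ‖y n - p‖ := by
          rw [norm_smul, norm_smul, Real.norm_eq_abs, Real.norm_eq_abs,
            abs_of_nonneg ha0, abs_of_nonneg (by linarith)]
        _ ≤ αs n * M + (1 - αs n) * M :=
          add_le_add (mul_le_mul_of_nonneg_left ihn ha0)
            (mul_le_mul_of_nonneg_left hyb (by linarith))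
        _ = M := by ring
    intro n hn
    refine ⟨hx_le n hn, le_trans (hu_le n hn) (hx_le n hn),
      le_trans (hz_mem n hn).2 (le_trans (hu_le n hn) (hx_le n hn)),
      hyM n hn (hx_le n hn)⟩
  -- conclusion
  obtain ⟨p₀, hp₀⟩ := hFne
  have hbnd : ∀ g : ℕ → H, (∀ n, 1 ≤ n → ‖g n - p₀‖ ≤ max ‖x 1 - p₀‖ (‖γ • f p₀ - A p₀‖ / Δ))
      → Bornology.IsBounded (g '' Set.Ici 1) := by
    intro g hg
    apply Bornology.IsBounded.subset (Metric.isBounded_closedBall (x := p₀)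
      (r := max ‖x 1 - p₀‖ (‖γ • f p₀ - A p₀‖ / Δ)))
    rintro _ ⟨n, hn, rfl⟩
    rw [Metric.mem_closedBall, dist_eq_norm]
    exact hg n hn
  exact ⟨fun p hp n hn => (main p hp n hn).1,
    hbnd x fun n hn => (main p₀ hp₀ n hn).1,
    hbnd u fun n hn => (main p₀ hp₀ n hn).2.1,
    hbnd z fun n hn => (main p₀ hp₀ n hn).2.2.1,
    hbnd y fun n hn => (main p₀ hp₀ n hn).2.2.2⟩
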